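/- Let k be a Noetherian commutative ring and let V be a finitely generated FI-module over k. Then every sub-FI-module of V is finitely generated. -/

import Mathlib

set_option linter.unusedSectionVars false

open CategoryTheory

/-- The category FI of finite sets and injections. -/
def FI : Type 1 := FintypeCat

instance : CoeSort FI Type := ⟨fun S => S.1⟩

noncomputable instance (S : FI) : Fintype S := @Fintype.ofFinite _ S.2

instance : Category FI where
  Hom S T := {f : S → T // Function.Injective f}
  id S := ⟨id, fun _ _ h => h⟩
  comp f g := ⟨g.1 ∘ f.1, fun _ _ h => f.2 (g.2 h)⟩

/-- A finite type, as an object of `FI`. -/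
def FI.of (α : Type) [Fintype α] : FI := FintypeCat.of α

/-- An FI-module over `k` is a functor from `FI` to `k`-modules. -/
abbrev FIModule (k : Type) [CommRing k] := FI ⥤ ModuleCat.{0} k

variable {k : Type} [CommRing k]

/-- A sub-FI-module of an FI-module `V`. -/
structure SubFIModule (V : FIModule k) where
  carrier : ∀ S : FI, Submodule k (V.obj S)
  map_mem : ∀ {S T : FI} (f : S ⟶ T) (x : V.obj S), x ∈ carrier S → V.map f x ∈ carrier T

/-- An FI-module is finitely generated if some finite collection of elements
is contained in no proper sub-FI-module. -/
def FIModule.FG (V : FIModule k) : Prop :=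
  ∃ (ι : Type) (_ : Finite ι) (S : ι → FI) (v : ∀ i, V.obj (S i)),
    ∀ W : SubFIModule V, (∀ i, v i ∈ W.carrier (S i)) → ∀ T : FI, W.carrier T = ⊤

/-- A sub-FI-module is finitely generated if it is generated by finitely many
of its elements, i.e. some finite collection of its elements lies in no strictly
smaller sub-FI-module. -/
def SubFIModule.FG {V : FIModule k} (W : SubFIModule V) : Prop :=
  ∃ (ι : Type) (_ : Finite ι) (S : ι → FI) (v : ∀ i, V.obj (S i)),
    (∀ i, v i ∈ W.carrier (S i)) ∧
    ∀ W' : SubFIModule V, (∀ i, v i ∈ W'.carrier (S i)) →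
      ∀ T : FI, W.carrier T ≤ W'.carrier T

/-! ### Auxiliary development: Noetherianity of FI-modules -/

namespace FINoeth

/-- The standard object `{1, …, n}` of `FI`. -/
def Fin' (n : ℕ) : FI := FI.of (Fin n)

/-- A morphism in `FI` between standard objects. -/
def homOf {n n' : ℕ} {g : Fin n → Fin n'} (hg : Function.Injective g) :
    Fin' n ⟶ Fin' n' := ⟨g, hg⟩

lemma homOf_comp {n n' n'' : ℕ} {g : Fin n → Fin n'} (hg : Function.Injective g)
    {g' : Fin n' → Fin n''} (hg' : Function.Injective g') :
    homOf hg ≫ homOf hg' = homOf (hg'.comp hg) := rfl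

instance (n : ℕ) : WellFoundedLT (Fin n) := Finite.to_wellFoundedLT

variable {J : Type} [Fintype J] [LinearOrder J] {m : J → ℕ}

/-- A monomial at level `n` : a generator index `t` together with a strictly
monotone (i.e. ordered) injection `Fin (m t) → Fin n`. -/
structure Mon (m : J → ℕ) (n : ℕ) where
  t : J
  f : Fin (m t) → Fin n
  hf : StrictMono f

namespace Mon

variable {n n' n'' : ℕ}

/-- The underlying data of a monomial, in a lexicographically ordered sigma type. -/
def toSig (a : Mon m n) : Σₗ t : J, Lex (Fin (m t) → Fin n) := ⟨a.t, toLex a.f⟩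

lemma toSig_injective : Function.Injective (toSig (m := m) (n := n)) := by
  rintro ⟨t, f, hf⟩ ⟨t', f', hf'⟩ h
  obtain ⟨rfl, h2⟩ := Sigma.mk.inj_iff.1 h
  obtain rfl : f = f' := by simpa using h2
  rfl

noncomputable instance : LinearOrder (Mon m n) :=
  LinearOrder.lift' (toSig (m := m) (n := n)) toSig_injective

lemma le_iff {a b : Mon m n} : a ≤ b ↔ toSig a ≤ toSig b := Iff.rfl

lemma lt_iff {a b : Mon m n} : a < b ↔ toSig a < toSig b := by
  rw [lt_iff_le_not_ge, lt_iff_le_not_ge, le_iff, le_iff]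

instance : Finite (Mon m n) := by
  have : Function.Injective (fun a : Mon m n => (⟨a.t, a.f⟩ : Σ t : J, (Fin (m t) → Fin n))) := by
    rintro ⟨t, f, hf⟩ ⟨t', f', hf'⟩ h
    obtain ⟨rfl, h2⟩ := Sigma.mk.inj_iff.1 h
    obtain rfl : f = f' := by simpa using h2
    rfl
  exact Finite.of_injective _ this

/-- Action of an ordered injection `Fin n → Fin n'` on monomials. -/
def act (g : Fin n → Fin n') (hg : StrictMono g) (a : Mon m n) : Mon m n' :=
  ⟨a.t, g ∘ a.f, hg.comp a.hf⟩

@[simp] lemma act_t (g : Fin n → Fin n') (hg : StrictMono g) (a : Mon m n) :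
    (act g hg a).t = a.t := rfl

lemma act_id (a : Mon m n) : act id strictMono_id a = a := rfl

lemma act_comp (g : Fin n → Fin n') (hg : StrictMono g) (g' : Fin n' → Fin n'')
    (hg' : StrictMono g') (a : Mon m n) :
    act g' hg' (act g hg a) = act (g' ∘ g) (hg'.comp hg) a := rfl

lemma act_strictMono {g : Fin n → Fin n'} (hg : StrictMono g) :
    StrictMono (act g hg (m := m)) := by
  intro a b hab
  rw [lt_iff, Sigma.Lex.lt_def] at hab ⊢
  obtain h | ⟨h, h2⟩ := hab
  · exact Or.inl h
  · refine Or.inr ?_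
    obtain ⟨t, f, hf⟩ := a
    obtain ⟨t', f', hf'⟩ := b
    dsimp [toSig] at h
    subst h
    dsimp [toSig, act] at h2 ⊢
    refine ⟨rfl, ?_⟩
    obtain ⟨i, hlt, heq⟩ := h2
    exact ⟨i, fun j hj => congrArg g (hlt j hj), hg heq⟩

lemma act_injective {g : Fin n → Fin n'} (hg : StrictMono g) :
    Function.Injective (act g hg (m := m)) := (act_strictMono hg).injective

lemma act_monotone {g : Fin n → Fin n'} (hg : StrictMono g) :
    Monotone (act g hg (m := m)) := (act_strictMono hg).monotone


/-! #### Gap vectors and the well-quasi-order -/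

/-- Extended endpoint sequence of a monomial: `0`, then `f 0 + 1, …, f (m-1) + 1`, then `n+1`. -/
def extE (a : Mon m n) (i : ℕ) : ℕ :=
  if h : 0 < i ∧ i ≤ m a.t then (a.f ⟨i - 1, by omega⟩ : ℕ) + 1
  else if i = 0 then 0 else n + 1

/-- Gap vector of a monomial. -/
def gap (a : Mon m n) (i : ℕ) : ℕ := extE a (i + 1) - extE a i

lemma extE_zero (a : Mon m n) : extE a 0 = 0 := by simp [extE]

lemma extE_f (a : Mon m n) (j : Fin (m a.t)) : extE a ((j : ℕ) + 1) = (a.f j : ℕ) + 1 := by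
  have h : 0 < (j : ℕ) + 1 ∧ (j : ℕ) + 1 ≤ m a.t := ⟨by omega, by omega⟩
  rw [extE, dif_pos h]
  have h2 : (⟨(j : ℕ) + 1 - 1, by omega⟩ : Fin (m a.t)) = j := Fin.ext (by simp)
  rw [h2]

lemma extE_top (a : Mon m n) {i : ℕ} (h : m a.t < i) : extE a i = n + 1 := by
  rw [extE, dif_neg (by omega), if_neg (by omega)]

lemma extE_mono_succ (a : Mon m n) (i : ℕ) : extE a i ≤ extE a (i + 1) := by
  rcases Nat.eq_zero_or_pos i with rfl | hi
  · rw [extE_zero]; exact Nat.zero_le _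
  rcases le_or_gt (i + 1) (m a.t) with hle2 | hlt2
  · rw [extE, dif_pos (⟨hi, by omega⟩ : 0 < i ∧ i ≤ m a.t),
      extE, dif_pos (⟨by omega, hle2⟩ : 0 < i + 1 ∧ i + 1 ≤ m a.t)]
    have h := a.hf (show (⟨i - 1, by omega⟩ : Fin (m a.t)) < ⟨i + 1 - 1, by omega⟩ from by
      simp only [Fin.mk_lt_mk]; omega)
    exact Nat.add_le_add_right (le_of_lt h) 1
  rcases le_or_gt i (m a.t) with hle | hlt
  · rw [extE, dif_pos (⟨hi, hle⟩ : 0 < i ∧ i ≤ m a.t), extE_top a hlt2]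
    exact Nat.add_le_add_right (le_of_lt (a.f _).isLt) 1
  · rw [extE_top a hlt, extE_top a (by omega)]

lemma extE_succ_eq (a : Mon m n) (i : ℕ) : extE a (i + 1) = extE a i + gap a i := by
  have := extE_mono_succ a i
  rw [gap]; omega

lemma gap_eq_zero (a : Mon m n) {i : ℕ} (h : m a.t < i) : gap a i = 0 := by
  rw [gap, extE_top a h, extE_top a (by omega)]
  omega

lemma mk_eq_mk {n : ℕ} {t : J} {f g : Fin (m t) → Fin n} {hf : StrictMono f}
    {hg : StrictMono g} (h : f = g) : Mon.mk t f hf = Mon.mk t g hg := by cases h; rfl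

/-- The key construction: if the gap vector of `a` is dominated by that of `b` (and they
have the same generator index), then `b` is obtained from `a` by an ordered injection. -/
lemma exists_act_eq {n n' : ℕ} (a : Mon m n) (b : Mon m n') (ht : a.t = b.t)
    (hgap : ∀ i, gap a i ≤ gap b i) :
    ∃ (g : Fin n → Fin n') (hg : StrictMono g), act g hg a = b := by
  -- extE domination and difference estimates
  have hE : ∀ i, extE a i ≤ extE b i := by
    intro i
    induction i with
    | zero => rw [extE_zero, extE_zero]
    | succ i ih =>
      rw [extE_succ_eq, extE_succ_eq]
      have := hgap i; omega
  have hdiff : ∀ i i', i ≤ i' → extE a i' + extE b i ≤ extE b i' + extE a i := by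
    intro i i' hii'
    induction i', hii' using Nat.le_induction with
    | base => omega
    | succ i' hii' ih =>
      rw [extE_succ_eq a i', extE_succ_eq b i']
      have := hgap i'; omega
  obtain ⟨t, f, hf⟩ := a
  obtain ⟨t', f', hf'⟩ := b
  dsimp at ht
  subst ht
  have hEf : ∀ j : Fin (m t), extE ⟨t, f, hf⟩ ((j : ℕ) + 1) = (f j : ℕ) + 1 := fun j =>
    extE_f ⟨t, f, hf⟩ j
  have hEf' : ∀ j : Fin (m t), extE ⟨t, f', hf'⟩ ((j : ℕ) + 1) = (f' j : ℕ) + 1 := fun j =>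
    extE_f ⟨t, f', hf'⟩ j
  have hff' : ∀ j : Fin (m t), (f j : ℕ) ≤ f' j := by
    intro j
    have := hE ((j : ℕ) + 1)
    rw [hEf j, hEf' j] at this
    omega
  have htop : extE ⟨t, f, hf⟩ ((m t) + 1) = n + 1 := extE_top _ (Nat.lt_succ_self _)
  have htop' : extE ⟨t, f', hf'⟩ ((m t) + 1) = n' + 1 := extE_top _ (Nat.lt_succ_self _)
  have hnn' : n ≤ n' := by have := hE ((m t) + 1); rw [htop, htop'] at this; omega
  rcases Nat.eq_zero_or_pos (m t) with hm0 | hm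
  · -- no generators: any order embedding works
    refine ⟨Fin.castLE hnn', Fin.strictMono_castLE hnn', ?_⟩
    have hcomp : Fin.castLE hnn' ∘ f = f' := by
      funext j
      exact absurd j.2 (by omega)
    exact mk_eq_mk hcomp
  · -- main case
    have hdd : ∀ j j' : Fin (m t), (j : ℕ) ≤ (j' : ℕ) →
        (f j' : ℕ) + (f' j : ℕ) ≤ (f' j' : ℕ) + (f j : ℕ) := by
      intro j j' hjj'
      have := hdiff ((j : ℕ) + 1) ((j' : ℕ) + 1) (by omega)
      rw [hEf j, hEf' j, hEf j', hEf' j'] at this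
      omega
    have hlast : ∀ j : Fin (m t), (j : ℕ) = (m t) - 1 → n + (f' j : ℕ) ≤ n' + (f j : ℕ) := by
      intro j hj
      have := hdiff ((j : ℕ) + 1) ((m t) + 1) (by omega)
      rw [hEf j, hEf' j, htop, htop'] at this
      omega
    -- counting function
    set cnt : ℕ → ℕ := fun x => ((Finset.univ : Finset (Fin (m t))).filter
      (fun j => (f j : ℕ) ≤ x)).card with hcnt
    have cnt_le : ∀ x, cnt x ≤ (m t) := by
      intro x
      calc cnt x ≤ (Finset.univ : Finset (Fin (m t))).card := Finset.card_filter_le _ _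
      _ = (m t) := by simp
    have cnt_iff : ∀ (x : ℕ) (j : Fin (m t)), (f j : ℕ) ≤ x ↔ (j : ℕ) < cnt x := by
      intro x j
      constructor
      · intro hj
        have hsub : Finset.Iic j ⊆ (Finset.univ : Finset (Fin (m t))).filter
            (fun j => (f j : ℕ) ≤ x) := by
          intro j' hj'
          simp only [Finset.mem_Iic] at hj'
          simp only [Finset.mem_filter, Finset.mem_univ, true_and]
          exact le_trans (by exact_mod_cast hf.monotone hj') hj
        have := Finset.card_le_card hsub
        rw [Fin.card_Iic] at this
        have hcx : cnt x = ((Finset.univ : Finset (Fin (m t))).filter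
          (fun j => (f j : ℕ) ≤ x)).card := rfl
        omega
      · intro hj
        by_contra hx
        push_neg at hx
        have hsub : (Finset.univ : Finset (Fin (m t))).filter (fun j => (f j : ℕ) ≤ x) ⊆
            Finset.Iio j := by
          intro j' hj'
          simp only [Finset.mem_filter, Finset.mem_univ, true_and] at hj'
          simp only [Finset.mem_Iio]
          by_contra hjj
          push_neg at hjj
          have : (f j : ℕ) ≤ (f j' : ℕ) := by exact_mod_cast hf.monotone hjj
          omega
        have := Finset.card_le_card hsub
        rw [Fin.card_Iio] at this
        have hcx : cnt x = ((Finset.univ : Finset (Fin (m t))).filter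
          (fun j => (f j : ℕ) ≤ x)).card := rfl
        omega
    have cnt_mono : ∀ x y, x ≤ y → cnt x ≤ cnt y := by
      intro x y hxy
      apply Finset.card_le_card
      intro j hj
      simp only [Finset.mem_filter, Finset.mem_univ, true_and] at hj ⊢
      omega
    -- index of the relevant generator point
    set K : ℕ → Fin (m t) := fun x => ⟨cnt x - 1, by have := cnt_le x; omega⟩ with hK
    set ofs : ℕ → ℕ := fun x => if 0 < cnt x then (f' (K x) : ℕ) - (f (K x) : ℕ) else 0
      with hofs
    have ofs_eq : ∀ x : ℕ, ofs x =
        if 0 < cnt x then (f' (K x) : ℕ) - (f (K x) : ℕ) else 0 := fun _ => rfl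
    have K_eq : ∀ x : ℕ, (K x : ℕ) = cnt x - 1 := fun _ => rfl
    have ofs_mono : ∀ x y : ℕ, x ≤ y → ofs x ≤ ofs y := by
      intro x y hxy
      rw [ofs_eq, ofs_eq]
      rcases Nat.eq_zero_or_pos (cnt x) with h0 | h0
      · rw [if_neg (by omega)]; exact Nat.zero_le _
      have hcm := cnt_mono x y hxy
      have hcy : 0 < cnt y := by omega
      rw [if_pos h0, if_pos hcy]
      have hKK : (K x : ℕ) ≤ (K y : ℕ) := by rw [K_eq, K_eq]; omega
      have h1 := hdd (K x) (K y) hKK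
      have h2 := hff' (K x)
      have h3 := hff' (K y)
      omega
    have gval : ∀ x : Fin n, (x : ℕ) + ofs (x : ℕ) < n' := by
      intro x
      rw [ofs_eq]
      rcases Nat.eq_zero_or_pos (cnt (x : ℕ)) with h0 | h0
      · rw [if_neg (by omega)]
        have hj0 : (x : ℕ) < (f ⟨0, hm⟩ : ℕ) := by
          by_contra hc
          push_neg at hc
          have h5 := (cnt_iff (x : ℕ) ⟨0, hm⟩).1 hc
          have h6 : ((⟨0, hm⟩ : Fin (m t)) : ℕ) = 0 := rfl
          omega
        have h1 := hff' ⟨0, hm⟩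
        have h2 := (f' ⟨0, hm⟩).isLt
        omega
      · rw [if_pos h0]
        have hKx : (f (K (x : ℕ)) : ℕ) ≤ (x : ℕ) := by
          rw [cnt_iff, K_eq]
          omega
        rcases lt_or_eq_of_le (cnt_le (x : ℕ)) with hlt | heq
        · have hj1 : (x : ℕ) < (f ⟨cnt (x : ℕ), hlt⟩ : ℕ) := by
            by_contra hc
            push_neg at hc
            have h5 := (cnt_iff (x : ℕ) ⟨cnt (x : ℕ), hlt⟩).1 hc
            have h6 : ((⟨cnt (x : ℕ), hlt⟩ : Fin (m t)) : ℕ) = cnt (x : ℕ) := rfl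
            omega
          have h1 := hdd (K (x : ℕ)) ⟨cnt (x : ℕ), hlt⟩
            (by rw [K_eq]; exact Nat.sub_le _ _)
          have h2 := hff' (K (x : ℕ))
          have h3 := (f' ⟨cnt (x : ℕ), hlt⟩).isLt
          omega
        · have h1 := hlast (K (x : ℕ)) (by rw [K_eq, heq])
          have h2 := hff' (K (x : ℕ))
          have h3 := x.isLt
          omega
    refine ⟨fun x => ⟨(x : ℕ) + ofs (x : ℕ), gval x⟩, ?_, ?_⟩
    · intro x y hxy
      simp only [Fin.mk_lt_mk]
      have h1 := ofs_mono (x : ℕ) (y : ℕ) (le_of_lt hxy)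
      have h2 : (x : ℕ) < (y : ℕ) := hxy
      omega
    · show Mon.mk t ((fun x : Fin n => (⟨(x : ℕ) + ofs (x : ℕ), gval x⟩ : Fin n')) ∘ f) _ =
        Mon.mk t f' hf'
      have hcomp : (fun x : Fin n => (⟨(x : ℕ) + ofs (x : ℕ), gval x⟩ : Fin n')) ∘ f = f' := by
        funext j
        have hcj : cnt ((f j : ℕ)) = (j : ℕ) + 1 := by
          have h1 := (cnt_iff ((f j : ℕ)) j).1 le_rfl
          have h2 : cnt ((f j : ℕ)) ≤ (j : ℕ) + 1 := by
            by_contra hcc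
            push_neg at hcc
            have hjlt : (j : ℕ) + 1 < m t := by have := cnt_le ((f j : ℕ)); omega
            have h3 := (cnt_iff ((f j : ℕ)) ⟨(j : ℕ) + 1, hjlt⟩).2 (by
              have h6 : ((⟨(j : ℕ) + 1, hjlt⟩ : Fin (m t)) : ℕ) = (j : ℕ) + 1 := rfl
              omega)
            have h4 := hf (show j < ⟨(j : ℕ) + 1, hjlt⟩ from by
              simp only [Fin.lt_def]; omega)
            simp only [Fin.lt_def] at h4
            omega
          omega
        have hKj : K ((f j : ℕ)) = j := Fin.ext (by rw [K_eq, hcj]; omega)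
        apply Fin.ext
        show ((f j : ℕ)) + ofs ((f j : ℕ)) = (f' j : ℕ)
        rw [ofs_eq, if_pos (by omega : 0 < cnt ((f j : ℕ))), hKj]
        have := hff' j
        omega
      exact mk_eq_mk hcomp

/-- The "divisibility" quasi-order on monomials of all levels. -/
def Rrel (p q : Σ n : ℕ, Mon m n) : Prop :=
  ∃ (g : Fin p.1 → Fin q.1) (hg : StrictMono g), act g hg p.2 = q.2

lemma Rrel_refl (p : Σ n : ℕ, Mon m n) : Rrel p p := ⟨id, strictMono_id, act_id p.2⟩

lemma Rrel_trans {p q r : Σ n : ℕ, Mon m n} (h1 : Rrel p q) (h2 : Rrel q r) : Rrel p r := by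
  obtain ⟨g, hg, h1⟩ := h1
  obtain ⟨g', hg', h2⟩ := h2
  refine ⟨g' ∘ g, hg'.comp hg, ?_⟩
  rw [← act_comp g hg g' hg', h1, h2]

instance : IsRefl (Σ n : ℕ, Mon m n) Rrel := ⟨Rrel_refl⟩
instance : IsTrans (Σ n : ℕ, Mon m n) Rrel := ⟨fun _ _ _ => Rrel_trans⟩
instance : IsPreorder (Σ n : ℕ, Mon m n) Rrel where
  refl := Rrel_refl
  trans := fun _ _ _ => Rrel_trans

lemma eq_pwo (α : Type*) [Finite α] :
    Set.PartiallyWellOrderedOn (Set.univ : Set α) (· = ·) := by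
  rw [Set.partiallyWellOrderedOn_iff_exists_lt]
  intro f _
  obtain ⟨i, j, hne, heq⟩ := Finite.exists_ne_map_eq_of_infinite f
  rcases hne.lt_or_gt with h | h
  · exact ⟨i, j, h, heq⟩
  · exact ⟨j, i, h, heq.symm⟩

/-- Well-quasi-orderedness of the divisibility order on monomials:
combination of Dickson's lemma and the pigeonhole principle. -/
lemma Rrel_pwo (m : J → ℕ) :
    Set.PartiallyWellOrderedOn (Set.univ : Set (Σ n : ℕ, Mon m n)) (Rrel (m := m)) := by
  classical
  rw [Set.partiallyWellOrderedOn_iff_exists_lt]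
  intro seq _
  set M := (Finset.univ : Finset J).sup m + 1 with hM
  have hmM : ∀ t : J, m t < M := fun t => by
    have : m t ≤ (Finset.univ : Finset J).sup m := Finset.le_sup (Finset.mem_univ t)
    omega
  set key : ℕ → J × (Fin M → ℕ) :=
    fun i => ((seq i).2.t, fun j => gap (seq i).2 (j : ℕ)) with hkey
  have h1 := eq_pwo J
  have hwo : IsWellOrder ℕ (· < ·) := { }
  have h2 : Set.PartiallyWellOrderedOn (Set.univ : Set (Fin M → ℕ)) (· ≤ ·) :=
    Set.isPWO_of_wellQuasiOrderedLE _
  have h12 := h1.prod h2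
  obtain ⟨i, j, hij, hr⟩ := Set.partiallyWellOrderedOn_iff_exists_lt.1 h12 key (fun i => by simp)
  refine ⟨i, j, hij, ?_⟩
  obtain ⟨hteq, hle⟩ := hr
  refine exists_act_eq _ _ hteq ?_
  intro iN
  rcases lt_or_ge iN M with hiN | hiN
  · exact hle ⟨iN, hiN⟩
  · rw [gap_eq_zero _ (by have := hmM (seq i).2.t; omega),
      gap_eq_zero _ (by have := hmM (seq j).2.t; omega)]

end Mon

/-! ### Leading terms of elements of free modules on monomials -/

section Leading

variable {k : Type} [CommRing k] {J : Type} [Fintype J] [LinearOrder J] {m : J → ℕ}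
  {n n' : ℕ}

open Mon

/-- The action of an ordered injection on the free module on monomials. -/
noncomputable def mapAct (g : Fin n → Fin n') (hg : StrictMono g) :
    (Mon m n →₀ k) →ₗ[k] (Mon m n' →₀ k) :=
  Finsupp.lmapDomain k k (Mon.act g hg)

lemma mapAct_apply_act (g : Fin n → Fin n') (hg : StrictMono g) (y : Mon m n →₀ k)
    (b : Mon m n) : mapAct g hg y (Mon.act g hg b) = y b :=
  Finsupp.mapDomain_apply (act_injective hg) y b

lemma mapAct_support (g : Fin n → Fin n') (hg : StrictMono g) (y : Mon m n →₀ k) :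
    (mapAct g hg y).support ⊆ y.support.image (Mon.act g hg) :=
  Finsupp.mapDomain_support

/-- `b` is the leading monomial of `y`, with leading coefficient `c`. -/
def IsLead (y : Mon m n →₀ k) (b : Mon m n) (c : k) : Prop :=
  y b = c ∧ c ≠ 0 ∧ ∀ b' ∈ y.support, b' ≤ b

lemma exists_isLead {y : Mon m n →₀ k} (hy : y ≠ 0) : ∃ b c, IsLead y b c := by
  have hne : y.support.Nonempty := Finsupp.support_nonempty_iff.2 hy
  refine ⟨y.support.max' hne, y (y.support.max' hne), rfl, ?_, ?_⟩
  · exact Finsupp.mem_support_iff.1 (y.support.max'_mem hne)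
  · exact fun b' hb' => y.support.le_max' b' hb'

lemma IsLead.mem_support {y : Mon m n →₀ k} {b c} (h : IsLead y b c) : b ∈ y.support :=
  Finsupp.mem_support_iff.2 (by rw [h.1]; exact h.2.1)

lemma IsLead.unique {y : Mon m n →₀ k} {b c b' c'} (h : IsLead y b c) (h' : IsLead y b' c') :
    b = b' ∧ c = c' := by
  have h1 : b ≤ b' := h'.2.2 b h.mem_support
  have h2 : b' ≤ b := h.2.2 b' h'.mem_support
  have hb : b = b' := le_antisymm h1 h2
  exact ⟨hb, by rw [← h.1, ← h'.1, hb]⟩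

lemma IsLead.mapAct {y : Mon m n →₀ k} {b c} (h : IsLead y b c)
    (g : Fin n → Fin n') (hg : StrictMono g) :
    IsLead (mapAct g hg y) (Mon.act g hg b) c := by
  refine ⟨by rw [mapAct_apply_act, h.1], h.2.1, ?_⟩
  intro b' hb'
  obtain ⟨b₀, hb₀, rfl⟩ := Finset.mem_image.1 (mapAct_support g hg y hb')
  exact act_monotone hg (h.2.2 b₀ hb₀)

/-- Leading coefficients reachable from a finite list of elements, at a given monomial. -/
def ldSet (F : List (Σ n : ℕ, (Mon m n →₀ k))) {n : ℕ} (b : Mon m n) : Set k :=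
  {a | ∃ q ∈ F, ∃ b₀ : Mon m q.1, IsLead q.2 b₀ a ∧
       ∃ (g : Fin q.1 → Fin n) (hg : StrictMono g), Mon.act g hg b₀ = b}

/-- The key finiteness claim, combining Noetherianity of `k` with the
well-quasi-order on monomials. -/
theorem claimA [IsNoetherianRing k] (Y : ∀ n : ℕ, Submodule k (Mon m n →₀ k)) :
    ∃ F : List (Σ n : ℕ, (Mon m n →₀ k)), (∀ q ∈ F, q.2 ∈ Y q.1) ∧
      ∀ (n : ℕ) (y : Mon m n →₀ k), y ∈ Y n → ∀ (b : Mon m n) (c : k), IsLead y b c →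
        c ∈ Ideal.span (ldSet F b) := by
  by_contra hcon
  push_neg at hcon
  -- extract a "bad" element for every candidate list
  set E := Σ n : ℕ, ((Mon m n →₀ k) × Mon m n × k) with hE
  set toQ : E → Σ n : ℕ, (Mon m n →₀ k) := fun e => ⟨e.1, e.2.1⟩ with htoQ
  have hnext : ∀ l : List E, (∀ e ∈ l, e.2.1 ∈ Y e.1) →
      ∃ e : E, e.2.1 ∈ Y e.1 ∧ IsLead e.2.1 e.2.2.1 e.2.2.2 ∧
        e.2.2.2 ∉ Ideal.span (ldSet (l.map toQ) e.2.2.1) := by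
    intro l hl
    obtain ⟨n, y, hy, b, c, hlead, hspan⟩ := hcon (l.map toQ) (by
      intro q hq
      obtain ⟨e, he, rfl⟩ := List.mem_map.1 hq
      exact hl e he)
    exact ⟨⟨n, y, b, c⟩, hy, hlead, hspan⟩
  set chain : ℕ → {l : List E // ∀ e ∈ l, e.2.1 ∈ Y e.1} := fun i =>
    Nat.rec ⟨[], by intro e he; exact absurd he List.not_mem_nil⟩
      (fun _ prev => ⟨Classical.choose (hnext prev.1 prev.2) :: prev.1, by
        intro e he
        rcases List.mem_cons.1 he with rfl | he
        · exact (Classical.choose_spec (hnext prev.1 prev.2)).1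
        · exact prev.2 e he⟩) i
    with hchain
  set e : ℕ → E := fun i => Classical.choose (hnext (chain i).1 (chain i).2) with he
  have hespec : ∀ i, (e i).2.1 ∈ Y (e i).1 ∧ IsLead (e i).2.1 (e i).2.2.1 (e i).2.2.2 ∧
      (e i).2.2.2 ∉ Ideal.span (ldSet ((chain i).1.map toQ) (e i).2.2.1) := fun i =>
    Classical.choose_spec (hnext (chain i).1 (chain i).2)
  have chain_succ : ∀ i, (chain (i + 1)).1 = e i :: (chain i).1 := fun i => rfl
  have mem_chain : ∀ i j, j < i → e j ∈ (chain i).1 := by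
    intro i
    induction i with
    | zero => intro j hj; omega
    | succ i ih =>
      intro j hj
      rw [chain_succ i]
      rcases Nat.lt_succ_iff_lt_or_eq.1 hj with hj | rfl
      · exact List.mem_cons_of_mem _ (ih j hj)
      · exact List.mem_cons_self
  set pt : ℕ → Σ n : ℕ, Mon m n := fun i => ⟨(e i).1, (e i).2.2.1⟩ with hpt
  obtain ⟨φ, hφ⟩ := (Rrel_pwo m).exists_monotone_subseq (f := pt) (fun _ => Set.mem_univ _)
  set lc : ℕ → k := fun i => (e i).2.2.2 with hlc
  set Jd : ℕ →o Submodule k k :=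
    ⟨fun a => Ideal.span ((fun b => lc (φ b)) '' {x | x < a}), by
      intro a a' haa'
      exact Ideal.span_mono (Set.image_mono (fun x hx => lt_of_lt_of_le hx haa'))⟩
    with hJd
  have : IsNoetherian k k := by rwa [isNoetherianRing_iff] at *
  obtain ⟨a0, hstab⟩ := monotone_stabilizes_iff_noetherian.2 this Jd
  have key1 : lc (φ a0) ∈ Jd (a0 + 1) :=
    Ideal.subset_span ⟨a0, Nat.lt_succ_self a0, rfl⟩
  have key2 : Jd (a0 + 1) = Jd a0 := (hstab (a0 + 1) (Nat.le_succ a0)).symm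
  have key3 : (Jd a0 : Submodule k k) ≤
      Ideal.span (ldSet ((chain (φ a0)).1.map toQ) ((e (φ a0)).2.2.1)) := by
    rw [hJd]
    apply Ideal.span_le.2
    rintro a ⟨b, hb, rfl⟩
    apply Ideal.subset_span
    refine ⟨toQ (e (φ b)), List.mem_map_of_mem (f := toQ) (mem_chain _ _ (φ.strictMono hb)), ?_⟩
    refine ⟨(e (φ b)).2.2.1, (hespec (φ b)).2.1, ?_⟩
    obtain ⟨g, hg, hact⟩ := hφ b a0 (le_of_lt hb)
    exact ⟨g, hg, hact⟩
  have := (hespec (φ a0)).2.2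
  rw [key2] at key1
  exact this (key3 key1)

end Leading


/-! ### Generation from the finite cover -/

section Generation

variable {k : Type} [CommRing k] {J : Type} [Fintype J] [LinearOrder J] {m : J → ℕ}

/-- All shifts of elements of `F` to level `n`. -/
def shiftSet (F : List (Σ n : ℕ, (Mon m n →₀ k))) (n : ℕ) : Set (Mon m n →₀ k) :=
  {z | ∃ q ∈ F, ∃ (g : Fin q.1 → Fin n) (hg : StrictMono g), z = mapAct g hg q.2}

theorem claimB [IsNoetherianRing k] (Y : ∀ n : ℕ, Submodule k (Mon m n →₀ k))
    (hY : ∀ (n n' : ℕ) (g : Fin n → Fin n') (hg : StrictMono g) (y : Mon m n →₀ k),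
      y ∈ Y n → mapAct g hg y ∈ Y n') :
    ∃ F : List (Σ n : ℕ, (Mon m n →₀ k)), (∀ q ∈ F, q.2 ∈ Y q.1) ∧
      ∀ (n : ℕ) (y : Mon m n →₀ k), y ∈ Y n → y ∈ Submodule.span k (shiftSet F n) := by
  obtain ⟨F, hF1, hF2⟩ := claimA Y
  refine ⟨F, hF1, ?_⟩
  intro n
  have main : ∀ b : Mon m n, ∀ y : Mon m n →₀ k, y ∈ Y n →
      (∀ b' ∈ y.support, b' ≤ b) → y ∈ Submodule.span k (shiftSet F n) := by
    have hwf : WellFoundedLT (Mon m n) := Finite.to_wellFoundedLT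
    intro b
    refine hwf.wf.induction
      (C := fun b => ∀ y : Mon m n →₀ k, y ∈ Y n →
        (∀ b' ∈ y.support, b' ≤ b) → y ∈ Submodule.span k (shiftSet F n)) b ?_
    clear b
    intro b IH y hy hsupp
    rcases eq_or_ne y 0 with rfl | hy0
    · exact Submodule.zero_mem _
    obtain ⟨b₀, c, hlead⟩ := exists_isLead hy0
    have hb₀b : b₀ ≤ b := hsupp b₀ hlead.mem_support
    have hc := hF2 n y hy b₀ c hlead
    rw [Ideal.span] at hc
    obtain ⟨γ, hγsup, hγsum⟩ := Submodule.mem_span_set.1 hc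
    have hch : ∀ a ∈ γ.support, ∃ (q : Σ n' : ℕ, (Mon m n' →₀ k)), q ∈ F ∧
        ∃ b₀a : Mon m q.1, IsLead q.2 b₀a a ∧
          ∃ (g : Fin q.1 → Fin n) (hg : StrictMono g), Mon.act g hg b₀a = b₀ := by
      intro a ha
      obtain ⟨q, hq, b₀a, hld, g, hg, hact⟩ := hγsup ha
      exact ⟨q, hq, b₀a, hld, g, hg, hact⟩
    choose qa hqaF b0a hlda ga hga hgact using hch
    set z : Mon m n →₀ k :=
      ∑ a ∈ γ.support.attach, γ a.1 • mapAct (ga a.1 a.2) (hga a.1 a.2) (qa a.1 a.2).2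
      with hz
    have hld : ∀ (a : k) (h : a ∈ γ.support),
        IsLead (mapAct (ga a h) (hga a h) (qa a h).2) b₀ a := by
      intro a h
      have := (hlda a h).mapAct (ga a h) (hga a h)
      rwa [hgact a h] at this
    have hzY : z ∈ Y n := by
      refine Submodule.sum_mem _ (fun a _ => Submodule.smul_mem _ _ ?_)
      exact hY _ _ _ _ _ (hF1 _ (hqaF a.1 a.2))
    have hzspan : z ∈ Submodule.span k (shiftSet F n) := by
      refine Submodule.sum_mem _ (fun a _ => Submodule.smul_mem _ _ ?_)
      exact Submodule.subset_span ⟨qa a.1 a.2, hqaF a.1 a.2, ga a.1 a.2, hga a.1 a.2, rfl⟩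
    have hzb₀ : z b₀ = c := by
      rw [hz, Finsupp.finset_sum_apply]
      have : ∀ a ∈ γ.support.attach,
          (γ a.1 • mapAct (ga a.1 a.2) (hga a.1 a.2) (qa a.1 a.2).2) b₀ = γ a.1 * a.1 := by
        intro a _
        rw [Finsupp.smul_apply, (hld a.1 a.2).1, smul_eq_mul]
      rw [Finset.sum_congr rfl this]
      rw [Finset.sum_attach γ.support (fun a => γ a * a)]
      rw [← hγsum]
      rfl
    have hzsupp : ∀ b' ∈ z.support, b' ≤ b₀ := by
      intro b' hb'
      rw [hz] at hb'
      obtain ⟨a, ha, hmem⟩ := Finsupp.mem_support_finset_sum b' hb'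
      have hmem2 := Finsupp.support_smul hmem
      exact (hld a.1 a.2).2.2 b' hmem2
    rcases eq_or_ne (y - z) 0 with hyz | hyz
    · have : y = z := by rwa [sub_eq_zero] at hyz
      rw [this]; exact hzspan
    obtain ⟨b₁, c₁, hlead₁⟩ := exists_isLead hyz
    have hb₁supp := hlead₁.mem_support
    have hb₁le : b₁ ≤ b₀ := by
      have hu := Finsupp.support_sub (ι := Mon m n) hb₁supp
      rcases Finset.mem_union.1 hu with h | h
      · exact hlead.2.2 b₁ h
      · exact hzsupp b₁ h
    have hb₁ne : b₁ ≠ b₀ := by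
      intro hbb
      have h0 : (y - z) b₀ = 0 := by rw [Finsupp.sub_apply, hlead.1, hzb₀, sub_self]
      have := Finsupp.mem_support_iff.1 hb₁supp
      rw [hbb] at this
      exact this h0
    have hb₁lt : b₁ < b₀ := lt_of_le_of_ne hb₁le hb₁ne
    have hsub : y - z ∈ Submodule.span k (shiftSet F n) :=
      IH b₁ (lt_of_lt_of_le hb₁lt hb₀b) (y - z) (Submodule.sub_mem _ hy hzY) hlead₁.2.2
    have : y = (y - z) + z := (sub_add_cancel y z).symm
    rw [this]
    exact Submodule.add_mem _ hsub hzspan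
  intro y hy
  rcases eq_or_ne y 0 with rfl | hy0
  · exact Submodule.zero_mem _
  obtain ⟨b, c, hlead⟩ := exists_isLead hy0
  exact main b y hy hlead.2.2

end Generation


/-! ### From free modules on monomials to the FI-module `V` -/

section VModule

variable {k : Type} [CommRing k] (V : FIModule k)
variable {J : Type} [Fintype J] [LinearOrder J] {m : J → ℕ}

/-- The element of `V` corresponding to a monomial. -/
noncomputable def base (u : ∀ t : J, V.obj (Fin' (m t))) (n : ℕ) (a : Mon m n) :
    V.obj (Fin' n) :=
  V.map (homOf (g := a.f) a.hf.injective) (u a.t)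

/-- The structure map from the free module on monomials to `V`. -/
noncomputable def Phi (u : ∀ t : J, V.obj (Fin' (m t))) (n : ℕ) :
    (Mon m n →₀ k) →ₗ[k] V.obj (Fin' n) :=
  Finsupp.linearCombination k (base V u n)

lemma base_act (u : ∀ t : J, V.obj (Fin' (m t))) {n n' : ℕ} (g : Fin n → Fin n')
    (hg : StrictMono g) (a : Mon m n) :
    base V u n' (Mon.act g hg a) = V.map (homOf hg.injective) (base V u n a) := by
  show V.map (homOf (g := g ∘ a.f) ((hg.comp a.hf).injective)) (u a.t) =
    V.map (homOf hg.injective) (V.map (homOf (g := a.f) a.hf.injective) (u a.t))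
  have h : homOf (g := a.f) a.hf.injective ≫ homOf hg.injective =
      homOf (g := g ∘ a.f) ((hg.comp a.hf).injective) := rfl
  rw [← h, V.map_comp]
  rfl

lemma Phi_mapAct (u : ∀ t : J, V.obj (Fin' (m t))) {n n' : ℕ} (g : Fin n → Fin n')
    (hg : StrictMono g) (y : Mon m n →₀ k) :
    Phi V u n' (mapAct g hg y) = V.map (homOf hg.injective) (Phi V u n y) := by
  show Finsupp.linearCombination k (base V u n') (Finsupp.mapDomain (Mon.act g hg) y) = _
  rw [Finsupp.linearCombination_mapDomain]
  rw [Phi, Finsupp.apply_linearCombination]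
  have h2 : base V u n' ∘ Mon.act g hg = (⇑(V.map (homOf hg.injective)) ∘ base V u n) :=
    funext fun a => base_act V u g hg a
  rw [h2]

/-- The central result: if `V` is generated at the standard levels by the images of the
`u t`, then any sub-FI-module is generated at standard levels by finitely many elements. -/
theorem core [IsNoetherianRing k] (W : SubFIModule V)
    (u : ∀ t : J, V.obj (Fin' (m t)))
    (hgen : ∀ (n : ℕ) (x : V.obj (Fin' n)), x ∈ LinearMap.range (Phi V u n)) :
    ∃ (L : ℕ) (ns : Fin L → ℕ) (w : ∀ l, V.obj (Fin' (ns l))),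
      (∀ l, w l ∈ W.carrier (Fin' (ns l))) ∧
      ∀ (W' : SubFIModule V), (∀ l, w l ∈ W'.carrier (Fin' (ns l))) →
        ∀ n : ℕ, W.carrier (Fin' n) ≤ W'.carrier (Fin' n) := by
  classical
  set Y : ∀ n : ℕ, Submodule k (Mon m n →₀ k) :=
    fun n => (W.carrier (Fin' n)).comap (Phi V u n) with hYdef
  have hY : ∀ (n n' : ℕ) (g : Fin n → Fin n') (hg : StrictMono g) (y : Mon m n →₀ k),
      y ∈ Y n → mapAct g hg y ∈ Y n' := by
    intro n n' g hg y hy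
    simp only [hYdef, Submodule.mem_comap] at hy ⊢
    rw [Phi_mapAct]
    exact W.map_mem _ _ hy
  obtain ⟨F, hF1, hF2⟩ := claimB Y hY
  refine ⟨F.length, fun l => (F.get l).1, fun l => Phi V u _ (F.get l).2, ?_, ?_⟩
  · intro l
    exact hF1 _ (F.get_mem l)
  · intro W' hW' n x hx
    obtain ⟨y, rfl⟩ := hgen n x
    have hyY : y ∈ Y n := by simpa only [hYdef, Submodule.mem_comap] using hx
    have hspan := hF2 n y hyY
    have hmem : Phi V u n y ∈ Submodule.map (Phi V u n)
        (Submodule.span k (shiftSet F n)) := ⟨y, hspan, rfl⟩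
    rw [Submodule.map_span] at hmem
    refine Submodule.span_le.2 ?_ hmem
    rintro _ ⟨z, ⟨q, hqF, g, hg, rfl⟩, rfl⟩
    rw [Phi_mapAct]
    obtain ⟨l, rfl⟩ := List.mem_iff_get.1 hqF
    exact W'.map_mem (homOf hg.injective) _ (hW' l)

end VModule

end FINoeth


open FINoeth in
theorem stmt0 {k : Type} [CommRing k] [IsNoetherianRing k]
    (V : FIModule k) (hV : V.FG) (W : SubFIModule V) : W.FG := by
  classical
  obtain ⟨ι, hι, S, v, hVgen⟩ := hV
  haveI := hι
  haveI : Fintype ι := Fintype.ofFinite ι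
  -- the sub-FI-module generated by the `v i` is all of `V`
  have W0mem : ∀ {T T' : FI} (g : T ⟶ T') (x : V.obj T),
      x ∈ Submodule.span k {z | ∃ (i : ι) (f : S i ⟶ T), z = V.map f (v i)} →
      V.map g x ∈ Submodule.span k {z | ∃ (i : ι) (f : S i ⟶ T'), z = V.map f (v i)} := by
    intro T T' g x hx
    have h1 : V.map g x ∈ Submodule.map (V.map g).hom
        (Submodule.span k {z | ∃ (i : ι) (f : S i ⟶ T), z = V.map f (v i)}) := ⟨x, hx, rfl⟩
    rw [Submodule.map_span] at h1
    refine Submodule.span_le.2 ?_ h1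
    rintro _ ⟨z, ⟨i, f, rfl⟩, rfl⟩
    refine Submodule.subset_span ⟨i, f ≫ g, ?_⟩
    rw [V.map_comp]
    rfl
  set W0 : SubFIModule V :=
    { carrier := fun T => Submodule.span k {z | ∃ (i : ι) (f : S i ⟶ T), z = V.map f (v i)},
      map_mem := fun g x hx => W0mem g x hx } with hW0def
  have hW0 : ∀ T, W0.carrier T = ⊤ := by
    refine hVgen W0 (fun i => Submodule.subset_span ⟨i, 𝟙 (S i), ?_⟩)
    rw [V.map_id]
    rfl
  -- normalized generators indexed by `J`
  set c : ι → ℕ := fun i => Fintype.card (S i) with hc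
  set e : ∀ i : ι, (S i : Type) ≃ Fin (c i) := fun i => Fintype.equivFin (S i) with he
  letI : LinearOrder (Σ i : ι, Equiv.Perm (Fin (c i))) :=
    LinearOrder.lift' (Fintype.equivFin _) (Equiv.injective _)
  set m : (Σ i : ι, Equiv.Perm (Fin (c i))) → ℕ := fun j => c j.1 with hm
  set u : ∀ j : (Σ i : ι, Equiv.Perm (Fin (c i))), V.obj (Fin' (m j)) :=
    fun j => V.map (⟨fun x => j.2 (e j.1 x),
      (j.2.injective.comp (e j.1).injective)⟩ : S j.1 ⟶ Fin' (m j)) (v j.1) with hu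
  have hgen : ∀ (n : ℕ) (x : V.obj (Fin' n)), x ∈ LinearMap.range (Phi V u n) := by
    intro n x
    rw [Phi, Finsupp.range_linearCombination]
    have hx : x ∈ W0.carrier (Fin' n) := by rw [hW0]; exact Submodule.mem_top
    refine Submodule.span_le.2 ?_ hx
    rintro _ ⟨i, f, rfl⟩
    apply Submodule.subset_span
    -- factor `f` as a permutation followed by an ordered injection
    set q : S i → Fin n := f.1 with hq'
    have hq : Function.Injective q := f.2
    set p : Fin (c i) → Fin n := fun y => q ((e i).symm y) with hp'
    have hp : Function.Injective p := hq.comp (e i).symm.injective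
    set s : Finset (Fin n) := Finset.image p Finset.univ with hs'
    have hs : s.card = c i := by
      rw [hs', Finset.card_image_of_injective _ hp, Finset.card_univ, Fintype.card_fin]
    set oi := s.orderIsoOfFin hs with hoi
    set fm : Fin (c i) → Fin n := fun y => (oi y : Fin n) with hfm'
    have hfm : StrictMono fm := fun a b hab => oi.strictMono hab
    set σ : Fin (c i) → Fin (c i) :=
      fun y => oi.symm ⟨p y, Finset.mem_image_of_mem p (Finset.mem_univ y)⟩ with hσ'
    have hσ : Function.Injective σ := by
      intro a b hab
      have h2 := oi.symm.injective hab
      exact hp (congrArg Subtype.val h2)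
    set σe : Equiv.Perm (Fin (c i)) :=
      Equiv.ofBijective σ (Finite.injective_iff_bijective.1 hσ) with hσe
    refine ⟨⟨⟨i, σe⟩, fm, hfm⟩, ?_⟩
    show V.map (homOf (g := fm) hfm.injective) (u ⟨i, σe⟩) = V.map f (v i)
    have hcomp : (⟨fun x => σe (e i x), (σe.injective.comp (e i).injective)⟩ :
        S i ⟶ Fin' (c i)) ≫ homOf (g := fm) hfm.injective = f := by
      apply Subtype.ext
      funext x
      show fm (σ (e i x)) = q x
      show ((oi (oi.symm ⟨p (e i x), _⟩) : {y // y ∈ s}) : Fin n) = q x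
      rw [OrderIso.apply_symm_apply]
      show q ((e i).symm (e i x)) = q x
      rw [Equiv.symm_apply_apply]
    rw [← hcomp, V.map_comp]
    rfl
  obtain ⟨L, ns, w, hw, hgen'⟩ := core V W u hgen
  refine ⟨Fin L, inferInstance, fun l => Fin' (ns l), w, hw, ?_⟩
  intro W' hW' T x hx
  set eT := Fintype.equivFin (T : Type) with heT
  set A : T ⟶ Fin' (Fintype.card T) := ⟨fun y => eT y, eT.injective⟩ with hA
  set B : Fin' (Fintype.card T) ⟶ T := ⟨fun y => eT.symm y, eT.symm.injective⟩ with hB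
  have h1 := W.map_mem A x hx
  have h2 := hgen' W' hW' (Fintype.card T) h1
  have h3 := W'.map_mem B _ h2
  have hcomp : A ≫ B = 𝟙 T := by
    apply Subtype.ext
    funext y
    exact eT.symm_apply_apply y
  have h4 : V.map A ≫ V.map B = 𝟙 (V.obj T) := by
    rw [← V.map_comp, hcomp, V.map_id]
  have hxx : V.map B (V.map A x) = x := by
    have h5 : V.map B (V.map A x) = (V.map A ≫ V.map B) x := rfl
    rw [h5, h4]
    rfl
  rwa [hxx] at h3
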